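/- arXiv:1108.1108 — 9 statements merged into one kernel-verified Lean document; each statement's English description precedes it below -/
import Mathlib

section
/- Let R be an associative unital algebra over a commutative ring K of characteristic 0 (or K ⊇ ℚ), and x, y ∈ R with yx = xy + γ·1 for some γ ∈ K. Then for all natural numbers m, n: y^m · x^n = Σ_{k=0}^{min(m,n)} (m! · n! / (k! · (m-k)! · (n-k)!)) · γ^k · x^{n-k} · y^{m-k}. -/
lemma weyl_pow_comm {K : Type*} [CommRing K]
    {R : Type*} [Ring R] [Algebra K R]
    (γ : K) (x y : R) (h : y * x = x * y + γ • (1 : R)) :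
    ∀ j : ℕ, y * x ^ j = x ^ j * y + ((j : K) * γ) • x ^ (j - 1) := by
  intro j
  induction j with
  | zero => simp
  | succ j ih =>
    rcases j with _ | j
    · simpa using h
    · rw [pow_succ, ← mul_assoc, ih, Nat.add_sub_cancel, add_mul, smul_mul_assoc,
        ← pow_succ, mul_assoc, h, mul_add, ← mul_assoc, ← pow_succ, mul_smul_comm,
        mul_one, Nat.add_sub_cancel, add_assoc, ← add_smul]
      congr 2
      push_cast
      ring

lemma weyl_coeff_id (m n k : ℕ) :
    (k+1).factorial * (m+1).choose (k+1) * n.choose (k+1)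
      = (k+1).factorial * m.choose (k+1) * n.choose (k+1)
        + k.factorial * m.choose k * n.choose k * (n - k) := by
  rw [Nat.choose_succ_succ]
  have h1 : (k+1).factorial * m.choose k * n.choose (k+1)
      = k.factorial * m.choose k * n.choose k * (n - k) := by
    rw [Nat.factorial_succ]
    calc (k + 1) * k.factorial * m.choose k * n.choose (k+1)
        = k.factorial * m.choose k * (n.choose (k+1) * (k+1)) := by ring
      _ = k.factorial * m.choose k * (n.choose k * (n - k)) := by
          rw [Nat.choose_succ_right_eq]
      _ = k.factorial * m.choose k * n.choose k * (n - k) := by ring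
  rw [Nat.mul_add, Nat.add_mul, h1]
  ring

lemma weyl_main {K : Type*} [CommRing K]
    {R : Type*} [Ring R] [Algebra K R]
    (γ : K) (x y : R) (h : y * x = x * y + γ • (1 : R)) (m n : ℕ) :
    y ^ m * x ^ n =
      ∑ k ∈ Finset.range (m + 1),
        (((k.factorial * m.choose k * n.choose k : ℕ) : K) * γ ^ k) •
          (x ^ (n - k) * y ^ (m - k)) := by
  induction m with
  | zero => simp
  | succ m ih =>
    rw [pow_succ', mul_assoc, ih, Finset.mul_sum]
    have key : ∀ k ∈ Finset.range (m+1),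
        y * ((((k.factorial * m.choose k * n.choose k : ℕ) : K) * γ ^ k) •
          (x ^ (n - k) * y ^ (m - k)))
        = (((k.factorial * m.choose k * n.choose k : ℕ) : K) * γ ^ k) •
            (x ^ (n - k) * y ^ (m + 1 - k))
          + (((k.factorial * m.choose k * n.choose k : ℕ) : K) * γ ^ k *
              (((n - k : ℕ) : K) * γ)) •
            (x ^ (n - (k+1)) * y ^ (m + 1 - (k+1))) := by
      intro k hk
      rw [Finset.mem_range] at hk
      have hkm : k ≤ m := Nat.lt_succ_iff.mp hk
      have e1 : m + 1 - (k+1) = m - k := by omega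
      have e2 : n - (k+1) = n - k - 1 := by omega
      have e3 : m + 1 - k = m - k + 1 := by omega
      rw [e1, e2, e3, mul_smul_comm, ← mul_assoc, weyl_pow_comm γ x y h, add_mul,
        smul_mul_assoc, mul_assoc (x ^ (n - k)), ← pow_succ', smul_add, smul_smul]
    rw [Finset.sum_congr rfl key, Finset.sum_add_distrib]
    -- extend first sum to range (m+2) and peel off first term
    have hS1 : ∑ k ∈ Finset.range (m+1),
          ((((k.factorial * m.choose k * n.choose k : ℕ) : K) * γ ^ k) •
            (x ^ (n - k) * y ^ (m + 1 - k)))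
        = (∑ k ∈ Finset.range (m+1),
            ((((k+1).factorial * m.choose (k+1) * n.choose (k+1) : ℕ) : K) * γ ^ (k+1)) •
              (x ^ (n - (k+1)) * y ^ (m + 1 - (k+1))))
          + (((Nat.factorial 0 * m.choose 0 * n.choose 0 : ℕ) : K) * γ ^ 0) •
              (x ^ (n - 0) * y ^ (m + 1 - 0)) := by
      rw [← Finset.sum_range_succ' (fun k =>
        ((((k.factorial * m.choose k * n.choose k : ℕ) : K) * γ ^ k) •
            (x ^ (n - k) * y ^ (m + 1 - k)))) (m+1)]
      conv_rhs => rw [Finset.sum_range_succ]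
      simp [Nat.choose_succ_self]
    rw [hS1]
    rw [Finset.sum_range_succ' (fun k =>
      ((((k.factorial * (m+1).choose k * n.choose k : ℕ) : K) * γ ^ k) •
          (x ^ (n - k) * y ^ (m + 1 - k)))) (m+1)]
    rw [add_right_comm, ← Finset.sum_add_distrib]
    congr 1
    · apply Finset.sum_congr rfl
      intro k hk
      rw [← add_smul]
      congr 1
      have hc := weyl_coeff_id m n k
      push_cast [hc]
      ring
    · norm_num

lemma weyl_coeff_cast {K : Type*} [CommRing K] [Algebra ℚ K] {m n k : ℕ}
    (hkm : k ≤ m) (hkn : k ≤ n) :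
    algebraMap ℚ K ((m.factorial * n.factorial : ℚ) /
        (k.factorial * (m - k).factorial * (n - k).factorial))
      = ((k.factorial * m.choose k * n.choose k : ℕ) : K) := by
  have hq : ((m.factorial * n.factorial : ℚ) /
      (k.factorial * (m - k).factorial * (n - k).factorial))
      = ((k.factorial * m.choose k * n.choose k : ℕ) : ℚ) := by
    rw [div_eq_iff]
    · push_cast
      have h1 := Nat.choose_mul_factorial_mul_factorial hkm
      have h2 := Nat.choose_mul_factorial_mul_factorial hkn
      have : (k.factorial * m.choose k * n.choose k) *
          (k.factorial * (m-k).factorial * (n-k).factorial)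
          = (m.choose k * k.factorial * (m-k).factorial) *
            (n.choose k * k.factorial * (n-k).factorial) := by ring
      rw [← h1, ← h2]
      exact_mod_cast this.symm
    · positivity
  rw [hq, map_natCast]

theorem mul_formula_weyl {K : Type*} [CommRing K] [Algebra ℚ K]
    {R : Type*} [Ring R] [Algebra K R]
    (γ : K) (x y : R) (h : y * x = x * y + γ • (1 : R)) (m n : ℕ) :
    y ^ m * x ^ n =
      ∑ k ∈ Finset.range (min m n + 1),
        ((algebraMap ℚ K ((m.factorial * n.factorial : ℚ) /
            (k.factorial * (m - k).factorial * (n - k).factorial))) * γ ^ k) •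
          (x ^ (n - k) * y ^ (m - k)) := by
  rw [weyl_main γ x y h m n]
  rw [← Finset.sum_subset (Finset.range_subset_range.mpr (by omega :
      min m n + 1 ≤ m + 1))]
  · apply Finset.sum_congr rfl
    intro k hk
    rw [Finset.mem_range] at hk
    have hkm : k ≤ m := by omega
    have hkn : k ≤ n := by omega
    rw [weyl_coeff_cast hkm hkn]
  · intro k hk1 hk2
    rw [Finset.mem_range] at hk1
    rw [Finset.mem_range, not_lt] at hk2
    have : n < k := by omega
    rw [Nat.choose_eq_zero_of_lt this]
    simp
end

section
/- Let R be an associative unital algebra over a commutative ring K, x, y ∈ R with yx = xy + α·x + γ·1 where α ∈ K is invertible and γ ∈ K. Then for all natural numbers m, n: y^m · x^n = α^{-n} · Σ_{i=0}^{n} C(n,i) (-γ)^{n-i} (α·x + γ·1)^i (y + i·α·1)^m. -/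
section
variable {K : Type*} [CommRing K] {R : Type*} [Ring R] [Algebra K R]

lemma aux_yz (a γ : K) (x y : R)
    (h : y * x = x * y + a • x + γ • (1 : R)) :
    y * (a • x + γ • (1:R)) = (a • x + γ • (1:R)) * y + a • (a • x + γ • (1:R)) := by
  simp only [mul_add, add_mul, mul_smul_comm, smul_mul_assoc, h, one_mul, mul_one, smul_add]
  abel

lemma aux_y_zpow (a γ : K) (x y : R)
    (h : y * x = x * y + a • x + γ • (1 : R)) (i : ℕ) :
    y * (a • x + γ • (1:R)) ^ i =
      (a • x + γ • (1:R)) ^ i * (y + (i • a) • (1:R)) := by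
  induction i with
  | zero => simp
  | succ i ih =>
    set z := a • x + γ • (1:R) with hz
    have hyz : y * z = z * y + a • z := aux_yz a γ x y h
    rw [pow_succ, ← mul_assoc, ih, mul_assoc, add_mul, hyz, mul_assoc]
    congr 1
    simp only [smul_mul_assoc, one_mul, mul_add, mul_smul_comm, mul_one, succ_nsmul, add_smul,
      zero_smul, zero_add]
    abel

lemma aux_ypow_zpow (a γ : K) (x y : R)
    (h : y * x = x * y + a • x + γ • (1 : R)) (m i : ℕ) :
    y ^ m * (a • x + γ • (1:R)) ^ i =
      (a • x + γ • (1:R)) ^ i * (y + (i • a) • (1:R)) ^ m := by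
  induction m with
  | zero => simp
  | succ m ih =>
    rw [pow_succ', mul_assoc, ih, ← mul_assoc, aux_y_zpow a γ x y h, mul_assoc, ← pow_succ']

end

theorem mul_formula_alpha_gamma {K : Type*} [CommRing K] {R : Type*} [Ring R] [Algebra K R]
    (α : Kˣ) (γ : K) (x y : R)
    (h : y * x = x * y + (α : K) • x + γ • (1 : R)) (m n : ℕ) :
    y ^ m * x ^ n =
      ((α⁻¹ : Kˣ) : K) ^ n •
        ∑ i ∈ Finset.range (n + 1),
          ((n.choose i : K) * (-γ) ^ (n - i)) •
            (((α : K) • x + γ • (1 : R)) ^ i * (y + (i • (α : K)) • (1 : R)) ^ m) := by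
  set a : K := (α : K) with ha
  set z : R := a • x + γ • (1 : R) with hz
  have hax : a • x = z + (-γ) • (1 : R) := by
    rw [hz, neg_smul]; abel
  have hx : x ^ n = ((α⁻¹ : Kˣ) : K) ^ n • (z + (-γ) • (1 : R)) ^ n := by
    have h1 : ((α⁻¹ : Kˣ) : K) * a = 1 := by rw [ha, Units.inv_mul]
    rw [← hax, smul_pow, smul_smul, ← mul_pow, h1, one_pow, one_smul]
  rw [hx, mul_smul_comm]
  congr 1
  rw [((Commute.one_right z).smul_right (-γ)).add_pow, Finset.mul_sum]
  refine Finset.sum_congr rfl fun i _ => ?_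
  have hyp := aux_ypow_zpow a γ x y h m i
  rw [← hz] at hyp
  rw [smul_pow, one_pow, mul_smul_comm, mul_one, smul_mul_assoc, mul_smul_comm, ← mul_assoc, hyp]
  have hc : z ^ i * (y + (i • a) • 1) ^ m * (n.choose i : R)
      = (n.choose i : K) • (z ^ i * (y + (i • a) • 1) ^ m) := by
    rw [← (Nat.cast_commute (n.choose i) _).eq, ← nsmul_eq_mul, ← Nat.cast_smul_eq_nsmul K]
  rw [hc, smul_smul, mul_comm]
end

section
/- Let R be an associative unital algebra over a commutative ring K, x, y ∈ R with yx = xy + β·y + γ·1 where β ∈ K is invertible and γ ∈ K. Then for all natural numbers m, n: y^m · x^n = β^{-m} · Σ_{i=0}^{m} C(m,i) (-γ)^{m-i} (x + i·β·1)^n (β·y + γ·1)^i. -/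
theorem mul_formula_beta_gamma {K : Type*} [CommRing K] {R : Type*} [Ring R] [Algebra K R]
    (β : Kˣ) (γ : K) (x y : R)
    (h : y * x = x * y + (β : K) • y + γ • (1 : R)) (m n : ℕ) :
    y ^ m * x ^ n =
      ((β⁻¹ : Kˣ) : K) ^ m •
        ∑ i ∈ Finset.range (m + 1),
          ((m.choose i : K) * (-γ) ^ (m - i)) •
            ((x + (i • (β : K)) • (1 : R)) ^ n * ((β : K) • y + γ • (1 : R)) ^ i) := by
  set b : K := (β : K) with hb
  set z : R := b • y + γ • (1 : R) with hz
  have key : z * x = x * z + b • z := by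
    rw [hz, add_mul, smul_mul_assoc, h, smul_mul_assoc]
    simp only [smul_add, mul_add, smul_smul, one_mul, mul_one, mul_smul_comm]
    abel
  have step1 : ∀ a : K, z * (x + a • (1 : R)) = (x + (a + b) • (1 : R)) * z := by
    intro a
    rw [mul_add, key, mul_smul_comm, mul_one, add_mul, smul_mul_assoc, one_mul, add_smul]
    abel
  have stepn : ∀ (a : K) (n : ℕ), z * (x + a • (1 : R)) ^ n = (x + (a + b) • (1 : R)) ^ n * z := by
    intro a n
    induction n with
    | zero => simp
    | succ n ih =>
      rw [pow_succ', ← mul_assoc, step1, mul_assoc, ih, ← mul_assoc, ← pow_succ']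
  have zpow : ∀ i : ℕ, z ^ i * x ^ n = (x + (i • b) • (1 : R)) ^ n * z ^ i := by
    intro i
    induction i with
    | zero => simp
    | succ i ih =>
      rw [pow_succ', mul_assoc, ih, ← mul_assoc, stepn, mul_assoc, ← pow_succ']
      congr 2
      rw [succ_nsmul]
  have hbin : (z - γ • (1 : R)) ^ m =
      ∑ i ∈ Finset.range (m + 1), ((m.choose i : K) * (-γ) ^ (m - i)) • z ^ i := by
    have hc : Commute z ((-γ) • (1 : R)) := (Commute.one_right z).smul_right (-γ)
    rw [sub_eq_add_neg, ← neg_smul, hc.add_pow]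
    refine Finset.sum_congr rfl fun i _ => ?_
    rw [smul_pow, one_pow, mul_smul_comm, mul_one, smul_mul_assoc,
      (Nat.cast_commute (m.choose i) (z ^ i)).symm.eq, ← nsmul_eq_mul,
      ← Nat.cast_smul_eq_nsmul K, smul_smul, mul_comm]
  have hym : y ^ m = ((β⁻¹ : Kˣ) : K) ^ m • (z - γ • (1 : R)) ^ m := by
    have : z - γ • (1 : R) = b • y := by rw [hz]; abel
    rw [this, smul_pow, smul_smul, ← mul_pow]
    norm_num [hb]
  rw [hym, smul_mul_assoc, hbin, Finset.sum_mul]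
  congr 1
  refine Finset.sum_congr rfl fun i _ => ?_
  rw [smul_mul_assoc, zpow]
end

section
/- Let R be an associative unital algebra over a commutative ring K, q ∈ K, and x, y ∈ R with yx = q·xy. Then for every natural number n: (x+y)^n = Σ_{i=0}^{n} qbinom(n,i) · x^i · y^{n-i}, where qbinom denotes the Gaussian (q-) binomial coefficient. -/
/-- Gaussian (q-)binomial coefficient, via the q-Pascal recurrence
`[n+1, k+1]_q = [n, k]_q + q^(k+1) * [n, k+1]_q`. -/
def qbinom {K : Type*} [CommRing K] (q : K) : ℕ → ℕ → K
  | _, 0 => 1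
  | 0, _ + 1 => 0
  | n + 1, k + 1 => qbinom q n k + q ^ (k + 1) * qbinom q n (k + 1)

lemma qbinom_eq_zero {K : Type*} [CommRing K] (q : K) : ∀ n k : ℕ, n < k → qbinom q n k = 0
  | _, 0, h => by omega
  | 0, k + 1, _ => by simp [qbinom]
  | n + 1, k + 1, h => by
    rw [qbinom, qbinom_eq_zero q n k (by omega), qbinom_eq_zero q n (k + 1) (by omega)]
    ring

theorem q_binomial_theorem {K : Type*} [CommRing K] {R : Type*} [Ring R] [Algebra K R]
    (q : K) (x y : R) (h : y * x = q • (x * y)) (n : ℕ) :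
    (x + y) ^ n = ∑ i ∈ Finset.range (n + 1), qbinom q n i • (x ^ i * y ^ (n - i)) := by
  have key : ∀ i : ℕ, y * x ^ i = q ^ i • (x ^ i * y) := by
    intro i
    induction i with
    | zero => simp
    | succ i ih2 =>
      rw [pow_succ', ← mul_assoc, h, smul_mul_assoc, mul_assoc, ih2, mul_smul_comm,
        smul_smul, ← pow_succ', pow_succ', mul_assoc]
  induction n with
  | zero => simp [qbinom]
  | succ n ih =>
    rw [pow_succ', ih, Finset.mul_sum]
    have expand : ∀ i : ℕ, (x + y) * (qbinom q n i • (x ^ i * y ^ (n - i)))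
        = qbinom q n i • (x ^ (i + 1) * y ^ (n - i))
          + (q ^ i * qbinom q n i) • (x ^ i * y ^ (n - i + 1)) := by
      intro i
      rw [add_mul, mul_smul_comm, mul_smul_comm, ← mul_assoc y, key i,
        smul_mul_assoc, smul_smul, mul_comm (qbinom q n i) (q ^ i), mul_assoc (x ^ i),
        ← mul_assoc x, ← pow_succ', ← pow_succ']
    simp only [expand, Finset.sum_add_distrib]
    have hB : (∑ i ∈ Finset.range (n + 1), (q ^ i * qbinom q n i) • (x ^ i * y ^ (n - i + 1)))
        = y ^ (n + 1)
          + ∑ i ∈ Finset.range (n + 1),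
              (q ^ (i + 1) * qbinom q n (i + 1)) • (x ^ (i + 1) * y ^ (n - i)) := by
      rw [Finset.sum_range_succ'
        (fun i => (q ^ i * qbinom q n i) • (x ^ i * y ^ (n - i + 1))) n,
        Finset.sum_range_succ
        (fun i => (q ^ (i + 1) * qbinom q n (i + 1)) • (x ^ (i + 1) * y ^ (n - i))) n,
        qbinom_eq_zero q n (n + 1) (by omega)]
      simp only [pow_zero, one_mul, mul_zero, zero_smul, add_zero, Nat.sub_zero, qbinom,
        one_smul]
      rw [add_comm]
      congr 1
      refine Finset.sum_congr rfl fun i hi => ?_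
      rw [Finset.mem_range] at hi
      have hsub : n - (i + 1) + 1 = n - i := by omega
      rw [hsub]
    rw [hB, Finset.sum_range_succ'
      (fun i => qbinom q (n + 1) i • (x ^ i * y ^ (n + 1 - i))) (n + 1)]
    simp only [qbinom, Nat.succ_sub_succ, add_smul, Finset.sum_add_distrib, pow_zero,
      Nat.sub_zero, one_smul, mul_smul, ← mul_smul]
    rw [one_mul]
    abel
end

section
/- Let R be an associative unital algebra over a commutative ring K, q, α ∈ K, and x, y ∈ R with yx = q·xy + α·x. Then for all natural numbers m, n: y^m · x^n = x^n · (q^n·y + [n]_q·α·1)^m, where [n]_q = 1 + q + ... + q^{n-1}. -/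
/-- The q-integer `[n]_q = 1 + q + ⋯ + q^(n-1)`. -/
def qint {K : Type*} [CommRing K] (q : K) (n : ℕ) : K := ∑ i ∈ Finset.range n, q ^ i

theorem q_mul_formula_alpha {K : Type*} [CommRing K] {R : Type*} [Ring R] [Algebra K R]
    (q α : K) (x y : R) (h : y * x = q • (x * y) + α • x) (m n : ℕ) :
    y ^ m * x ^ n = x ^ n * (q ^ n • y + (qint q n * α) • (1 : R)) ^ m := by
  have key : ∀ n : ℕ, y * x ^ n = x ^ n * (q ^ n • y + (qint q n * α) • (1 : R)) := by
    intro n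
    induction n with
    | zero => simp [qint]
    | succ n ih =>
      have hq : qint q (n + 1) = q * qint q n + 1 := by
        simp [qint, Finset.sum_range_succ', pow_succ, Finset.mul_sum, mul_comm]
      calc y * x ^ (n + 1) = (y * x) * x ^ n := by rw [pow_succ', mul_assoc]
        _ = q • (x * (y * x ^ n)) + α • (x * x ^ n) := by
            rw [h, add_mul, smul_mul_assoc, smul_mul_assoc, mul_assoc]
        _ = q • (x * (x ^ n * (q ^ n • y + (qint q n * α) • (1 : R)))) + α • (x ^ (n + 1)) := by
            rw [ih, pow_succ']
        _ = x ^ (n + 1) * (q ^ (n + 1) • y + (qint q (n + 1) * α) • (1 : R)) := by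
            rw [hq, pow_succ', ← mul_assoc]
            rw [mul_add, mul_add, smul_add, add_mul]
            simp only [mul_smul_comm, smul_smul, ← pow_succ', smul_mul_assoc, mul_one]
            rw [pow_succ]
            ring_nf
            module
  induction m with
  | zero => simp
  | succ m ihm =>
      calc y ^ (m + 1) * x ^ n = y * (y ^ m * x ^ n) := by rw [pow_succ', mul_assoc]
        _ = y * (x ^ n * (q ^ n • y + (qint q n * α) • (1 : R)) ^ m) := by rw [ihm]
        _ = (y * x ^ n) * (q ^ n • y + (qint q n * α) • (1 : R)) ^ m := by rw [mul_assoc]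
        _ = x ^ n * (q ^ n • y + (qint q n * α) • (1 : R)) ^ (m + 1) := by
            rw [key, mul_assoc, ← pow_succ']
end

section
/- Let R be an associative unital algebra over a commutative ring K, q, β ∈ K, and x, y ∈ R with yx = q·xy + β·y. Then for all natural numbers m, n: y^m · x^n = (q^m·x + [m]_q·β·1)^n · y^m, where [m]_q = 1 + q + ... + q^{m-1}. -/
lemma qint_succ {K : Type*} [CommRing K] (q : K) (m : ℕ) :
    qint q (m + 1) = qint q m + q ^ m := by
  simp [qint, Finset.sum_range_succ]

lemma qint_key {K : Type*} [CommRing K] (q : K) (m : ℕ) :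
    q * qint q m + 1 = qint q m + q ^ m := by
  induction m with
  | zero => simp [qint]
  | succ m ih => rw [qint_succ]; ring_nf; ring_nf at ih; linear_combination ih

lemma q_mul_step {K : Type*} [CommRing K] {R : Type*} [Ring R] [Algebra K R]
    (q β : K) (x y : R) (h : y * x = q • (x * y) + β • y) (m : ℕ) :
    y ^ m * x = q ^ m • (x * y ^ m) + (qint q m * β) • y ^ m := by
  induction m with
  | zero => simp [qint]
  | succ m ih =>
    have : y ^ (m + 1) * x = y ^ m * (y * x) := by
      rw [pow_succ, mul_assoc]
    rw [this, h, mul_add, mul_smul_comm, mul_smul_comm, ← mul_assoc, ih,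
      qint_succ, pow_succ]
    simp only [add_mul, smul_mul_assoc, smul_add, smul_smul, add_smul, pow_succ,
      mul_assoc]
    match_scalars
    · ring
    · linear_combination β * qint_key q m

theorem q_mul_formula_beta {K : Type*} [CommRing K] {R : Type*} [Ring R] [Algebra K R]
    (q β : K) (x y : R) (h : y * x = q • (x * y) + β • y) (m n : ℕ) :
    y ^ m * x ^ n = (q ^ m • x + (qint q m * β) • (1 : R)) ^ n * y ^ m := by
  induction n with
  | zero => simp
  | succ n ih =>
    have key : y ^ m * x = (q ^ m • x + (qint q m * β) • (1 : R)) * y ^ m := by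
      rw [add_mul, smul_mul_assoc, smul_mul_assoc, one_mul, q_mul_step q β x y h m]
    calc y ^ m * x ^ (n + 1) = y ^ m * x * x ^ n := by rw [pow_succ', ← mul_assoc]
      _ = (q ^ m • x + (qint q m * β) • (1 : R)) * (y ^ m * x ^ n) := by
          rw [key, mul_assoc]
      _ = _ := by rw [ih, pow_succ', mul_assoc]
end

section
/- Let R be an associative unital algebra over a field K of characteristic 0 (or over ℚ), and x, d ∈ R with dx = xd + 1. Then for every natural number n: (x+d)^n = Σ over pairs (k,j) with k+j ≤ n and n-j-k even of (n! / (j! · k! · ((n-j-k)/2)!)) · (1/2)^{(n-j-k)/2} · x^k · d^j. -/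
open Finset

/-- The coefficient in the Weyl binomial theorem. -/
noncomputable def wc (n k j : ℕ) : ℚ :=
  if k + j ≤ n ∧ Even (n - j - k) then
    ((n.factorial : ℚ) / (j.factorial * k.factorial * ((n - j - k) / 2).factorial)) *
      (1 / 2 : ℚ) ^ ((n - j - k) / 2)
  else 0

lemma wc_zero {n k j : ℕ} (h : n < k + j) : wc n k j = 0 :=
  if_neg (fun hc => absurd hc.1 (by omega))

lemma wc_eq {n k j m : ℕ} (h : k + j + 2 * m = n) :
    wc n k j = (n.factorial : ℚ) / (j.factorial * k.factorial * m.factorial) * (1/2 : ℚ) ^ m := by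
  have h1 : n - j - k = 2 * m := by omega
  have h2 : Even (n - j - k) := by rw [h1]; exact even_two_mul m
  rw [wc, if_pos ⟨by omega, h2⟩, h1, Nat.mul_div_cancel_left m (by norm_num)]

lemma wc_rec (n k j : ℕ) :
    wc (n + 1) k j =
      (if k = 0 then 0 else wc n (k - 1) j) + (if j = 0 then 0 else wc n k (j - 1))
        + ((k : ℚ) + 1) * wc n (k + 1) j := by
  by_cases hle : k + j ≤ n + 1
  · rcases Nat.even_or_odd (n + 1 - j - k) with hev | hodd
    · obtain ⟨m, hm⟩ : ∃ m, k + j + 2 * m = n + 1 := by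
        rcases hev with ⟨r, hr⟩; exact ⟨r, by omega⟩
      set B : ℚ := (n.factorial : ℚ) / (j.factorial * k.factorial * m.factorial) * (1/2 : ℚ) ^ m
        with hB
      have hfj : (j.factorial : ℚ) ≠ 0 := by exact_mod_cast j.factorial_ne_zero
      have hfk : (k.factorial : ℚ) ≠ 0 := by exact_mod_cast k.factorial_ne_zero
      have hfm : (m.factorial : ℚ) ≠ 0 := by exact_mod_cast m.factorial_ne_zero
      have t1 : (if k = 0 then (0:ℚ) else wc n (k - 1) j) = (k : ℚ) * B := by
        rcases Nat.eq_zero_or_pos k with rfl | hk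
        · simp
        · obtain ⟨k', rfl⟩ := Nat.exists_eq_add_of_lt hk
          rw [if_neg (by omega)]
          simp only [Nat.add_sub_cancel]
          rw [wc_eq (m := m) (by omega), hB]
          have hfk' : ((k').factorial : ℚ) ≠ 0 := by exact_mod_cast k'.factorial_ne_zero
          rw [show 0 + k' + 1 = k' + 1 by omega] at *
          rw [Nat.factorial_succ]
          push_cast
          field_simp
          ring
      have t2 : (if j = 0 then (0:ℚ) else wc n k (j - 1)) = (j : ℚ) * B := by
        rcases Nat.eq_zero_or_pos j with rfl | hj
        · simp
        · obtain ⟨j', rfl⟩ := Nat.exists_eq_add_of_lt hj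
          rw [if_neg (by omega)]
          simp only [Nat.add_sub_cancel]
          rw [wc_eq (m := m) (by omega), hB]
          have hfj' : ((j').factorial : ℚ) ≠ 0 := by exact_mod_cast j'.factorial_ne_zero
          rw [show 0 + j' + 1 = j' + 1 by omega] at *
          rw [Nat.factorial_succ]
          push_cast
          field_simp
          ring
      have t3 : ((k : ℚ) + 1) * wc n (k + 1) j = 2 * (m : ℚ) * B := by
        rcases Nat.eq_zero_or_pos m with rfl | hm'
        · rw [wc_zero (by omega)]; simp
        · obtain ⟨m', rfl⟩ := Nat.exists_eq_add_of_lt hm'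
          rw [wc_eq (m := m') (by omega), hB]
          have hfm' : ((m').factorial : ℚ) ≠ 0 := by exact_mod_cast m'.factorial_ne_zero
          rw [show 0 + m' + 1 = m' + 1 by omega] at *
          rw [Nat.factorial_succ, pow_succ, Nat.factorial_succ]
          push_cast
          field_simp
      rw [t1, t2, t3, wc_eq (m := m) hm, Nat.factorial_succ]
      simp only [hB]
      have hc : (k : ℚ) + (j : ℚ) + 2 * (m : ℚ) = (n : ℚ) + 1 := by exact_mod_cast hm
      push_cast
      linear_combination (-((n.factorial : ℚ) /
        ((j.factorial : ℚ) * (k.factorial : ℚ) * (m.factorial : ℚ)) * (1/2 : ℚ) ^ m)) * hc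
    · have h0 : wc (n + 1) k j = 0 := by
        rw [wc, if_neg]
        rintro ⟨-, hev⟩
        rw [Nat.even_iff] at hev
        rw [Nat.odd_iff] at hodd
        omega
      have h1 : (if k = 0 then (0:ℚ) else wc n (k - 1) j) = 0 := by
        split
        · rfl
        · rw [wc, if_neg]
          rintro ⟨hle', hev⟩
          rw [Nat.even_iff] at hev
          rw [Nat.odd_iff] at hodd
          omega
      have h2 : (if j = 0 then (0:ℚ) else wc n k (j - 1)) = 0 := by
        split
        · rfl
        · rw [wc, if_neg]
          rintro ⟨hle', hev⟩
          rw [Nat.even_iff] at hev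
          rw [Nat.odd_iff] at hodd
          omega
      have h3 : wc n (k + 1) j = 0 := by
        rw [wc, if_neg]
        rintro ⟨hle', hev⟩
        rw [Nat.even_iff] at hev
        rw [Nat.odd_iff] at hodd
        omega
      rw [h0, h1, h2, h3]; ring
  · have h1 : (if k = 0 then (0:ℚ) else wc n (k - 1) j) = 0 := by
      split
      · rfl
      · exact wc_zero (by omega)
    have h2 : (if j = 0 then (0:ℚ) else wc n k (j - 1)) = 0 := by
      split
      · rfl
      · exact wc_zero (by omega)
    rw [wc_zero (by omega), h1, h2, wc_zero (by omega)]; ring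

section RSide

variable {R : Type*} [Ring R] [Algebra ℚ R] (x d : R) (h : d * x = x * d + 1)

include h in
lemma dxp (k : ℕ) : d * x ^ (k + 1) = x ^ (k + 1) * d + ((k : ℚ) + 1) • x ^ k := by
  induction k with
  | zero => simpa using h
  | succ k ih =>
    rw [pow_succ x (k + 1), ← mul_assoc, ih, add_mul, smul_mul_assoc, mul_assoc, h,
      mul_add, mul_one, ← mul_assoc, ← pow_succ, ← pow_succ]
    push_cast
    module

include h in
lemma d_mul_xd (k j : ℕ) :
    d * (x ^ k * d ^ j) = x ^ k * d ^ (j + 1) + (k : ℚ) • (x ^ (k - 1) * d ^ j) := by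
  cases k with
  | zero => simp [pow_succ']
  | succ k =>
    rw [← mul_assoc, dxp x d h, add_mul, smul_mul_assoc, mul_assoc, ← pow_succ',
      Nat.succ_sub_one]
    push_cast
    ring_nf

include h in
lemma weyl_key (n : ℕ) :
    (x + d) ^ n = ∑ k ∈ range (n + 1), ∑ j ∈ range (n + 1), wc n k j • (x ^ k * d ^ j) := by
  induction n with
  | zero => simp [wc]
  | succ n ih =>
    have hx : x * (∑ k ∈ range (n + 1), ∑ j ∈ range (n + 1), wc n k j • (x ^ k * d ^ j))
        = ∑ k ∈ range (n + 1), ∑ j ∈ range (n + 1), wc n k j • (x ^ (k + 1) * d ^ j) := by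
      rw [mul_sum]
      refine sum_congr rfl fun k _ => ?_
      rw [mul_sum]
      refine sum_congr rfl fun j _ => ?_
      rw [mul_smul_comm, ← mul_assoc, ← pow_succ']
    have hd : d * (∑ k ∈ range (n + 1), ∑ j ∈ range (n + 1), wc n k j • (x ^ k * d ^ j))
        = ∑ k ∈ range (n + 1), ∑ j ∈ range (n + 1),
            (wc n k j • (x ^ k * d ^ (j + 1)) + (wc n k j * k) • (x ^ (k - 1) * d ^ j)) := by
      rw [mul_sum]
      refine sum_congr rfl fun k _ => ?_
      rw [mul_sum]
      refine sum_congr rfl fun j _ => ?_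
      rw [mul_smul_comm, d_mul_xd x d h, smul_add, smul_smul]
    rw [pow_succ', ih, add_mul, hx, hd]
    simp only [Finset.sum_add_distrib]
    have hA : (∑ k ∈ range (n + 2), ∑ j ∈ range (n + 2),
            (if k = 0 then (0:ℚ) else wc n (k - 1) j) • (x ^ k * d ^ j))
        = ∑ k ∈ range (n + 1), ∑ j ∈ range (n + 1), wc n k j • (x ^ (k + 1) * d ^ j) := by
      rw [Finset.sum_range_succ' _ (n + 1)]
      simp only [Nat.succ_ne_zero, if_false, Nat.add_sub_cancel, zero_smul,
        sum_const_zero, add_zero, reduceIte]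
      refine sum_congr rfl fun k _ => ?_
      rw [sum_range_succ, wc_zero (show n < k + (n + 1) by omega), zero_smul, add_zero]
    have hB : (∑ k ∈ range (n + 2), ∑ j ∈ range (n + 2),
            (if j = 0 then (0:ℚ) else wc n k (j - 1)) • (x ^ k * d ^ j))
        = ∑ k ∈ range (n + 1), ∑ j ∈ range (n + 1), wc n k j • (x ^ k * d ^ (j + 1)) := by
      rw [sum_range_succ _ (n + 1)]
      have hlast : (∑ j ∈ range (n + 2),
          (if j = 0 then (0:ℚ) else wc n (n + 1) (j - 1)) • (x ^ (n + 1) * d ^ j)) = 0 := by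
        refine Finset.sum_eq_zero fun j _ => ?_
        rcases Nat.eq_zero_or_pos j with rfl | hj
        · simp
        · rw [if_neg (by omega), wc_zero (by omega), zero_smul]
      rw [hlast, add_zero]
      refine sum_congr rfl fun k _ => ?_
      rw [Finset.sum_range_succ' _ (n + 1)]
      simp only [Nat.succ_ne_zero, if_false, Nat.add_sub_cancel, zero_smul,
        add_zero, reduceIte]
    have hC : (∑ k ∈ range (n + 2), ∑ j ∈ range (n + 2),
            (((k : ℚ) + 1) * wc n (k + 1) j) • (x ^ k * d ^ j))
        = ∑ k ∈ range (n + 1), ∑ j ∈ range (n + 1), (wc n k j * k) • (x ^ (k - 1) * d ^ j) := by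
      have hz : ∀ a ∈ range (n + 2), n ≤ a →
          (∑ j ∈ range (n + 2), (((a : ℚ) + 1) * wc n (a + 1) j) • (x ^ a * d ^ j)) = 0 :=
        fun a _ ha => Finset.sum_eq_zero fun j _ => by rw [wc_zero (by omega)]; simp
      rw [show n + 2 = (n + 1) + 1 from rfl, sum_range_succ _ (n + 1), sum_range_succ _ n,
        hz (n + 1) (by simp) (by omega), hz n (by simp) (by omega), add_zero, add_zero]
      conv_rhs => rw [Finset.sum_range_succ' _ n]
      have h0 : (∑ j ∈ range (n + 1), (wc n 0 j * ((0 : ℕ) : ℚ)) • (x ^ (0 - 1) * d ^ j)) = 0 :=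
        Finset.sum_eq_zero fun j _ => by simp
      rw [h0, add_zero]
      refine sum_congr rfl fun k _ => ?_
      rw [sum_range_succ _ (n + 1), wc_zero (show n < (k + 1) + (n + 1) by omega),
        mul_zero, zero_smul, add_zero]
      refine sum_congr rfl fun j _ => ?_
      rw [Nat.add_sub_cancel, mul_comm]
      push_cast
      ring_nf
    calc
      (∑ k ∈ range (n + 1), ∑ j ∈ range (n + 1), wc n k j • (x ^ (k + 1) * d ^ j)) +
          ((∑ k ∈ range (n + 1), ∑ j ∈ range (n + 1), wc n k j • (x ^ k * d ^ (j + 1))) +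
            ∑ k ∈ range (n + 1), ∑ j ∈ range (n + 1), (wc n k j * k) • (x ^ (k - 1) * d ^ j))
          = ∑ k ∈ range (n + 2), ∑ j ∈ range (n + 2),
              ((if k = 0 then (0:ℚ) else wc n (k - 1) j) • (x ^ k * d ^ j) +
                ((if j = 0 then (0:ℚ) else wc n k (j - 1)) • (x ^ k * d ^ j) +
                  (((k : ℚ) + 1) * wc n (k + 1) j) • (x ^ k * d ^ j))) := by
        simp only [Finset.sum_add_distrib]
        rw [hA, hB, hC]
      _ = ∑ k ∈ range (n + 2), ∑ j ∈ range (n + 2), wc (n + 1) k j • (x ^ k * d ^ j) := by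
        refine sum_congr rfl fun k _ => sum_congr rfl fun j _ => ?_
        rw [wc_rec, add_smul, add_smul]
        exact (add_assoc _ _ _).symm

end RSide

theorem weyl_binomial_theorem {R : Type*} [Ring R] [Algebra ℚ R]
    (x d : R) (h : d * x = x * d + 1) (n : ℕ) :
    (x + d) ^ n =
      ∑ k ∈ Finset.range (n + 1), ∑ j ∈ Finset.range (n - k + 1),
        (if Even (n - j - k) then
          ((n.factorial : ℚ) /
              (j.factorial * k.factorial * ((n - j - k) / 2).factorial)) *
            (1 / 2 : ℚ) ^ ((n - j - k) / 2)
        else 0) • (x ^ k * d ^ j) := by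
  rw [weyl_key x d h n]
  refine Finset.sum_congr rfl fun k hk => ?_
  rw [Finset.mem_range] at hk
  rw [← Finset.sum_subset (Finset.range_subset_range.mpr (show n - k + 1 ≤ n + 1 by omega))
    (fun j _ hj => by
      rw [Finset.mem_range, not_lt] at hj
      rw [wc_zero (by omega), zero_smul])]
  refine Finset.sum_congr rfl fun j hj => ?_
  rw [Finset.mem_range] at hj
  have hkj : k + j ≤ n := by omega
  congr 1
  rw [wc]
  simp [hkj]
end

section
/- Let R be an associative unital ring of prime characteristic p, and x, y ∈ R with yx = xy + 1. Then x^p commutes with y and y^p commutes with x (i.e., x^p and y^p are central in the subring generated by x and y). -/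
lemma weyl_pow_aux {R : Type*} [Ring R] (x y : R) (h : y * x = x * y + 1) :
    ∀ n : ℕ, y * x ^ (n + 1) = x ^ (n + 1) * y + ((n : R) + 1) * x ^ n := by
  intro n
  induction n with
  | zero => simpa using h
  | succ n ih =>
    have key : y * x ^ (n + 1) * x
        = x ^ (n + 1) * (x * y + 1) + ((n : R) + 1) * x ^ (n + 1) := by
      rw [ih, add_mul, mul_assoc, h, mul_assoc, ← pow_succ]
    calc y * x ^ (n + 1 + 1) = y * x ^ (n + 1) * x := by rw [pow_succ, mul_assoc]
      _ = x ^ (n + 1) * (x * y + 1) + ((n : R) + 1) * x ^ (n + 1) := key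
      _ = x ^ (n + 1 + 1) * y + (((n : ℕ) + 1 : ℕ) + 1 : R) * x ^ (n + 1) := by
          push_cast
          rw [mul_add, mul_one, ← mul_assoc, ← pow_succ]
          generalize x ^ (n + 1 + 1) = b
          generalize x ^ (n + 1) = a
          noncomm_ring

lemma weyl_xp {p : ℕ} [Fact p.Prime] {R : Type*} [Ring R] [CharP R p]
    (x y : R) (h : y * x = x * y + 1) : Commute (x ^ p) y := by
  have hp : p ≠ 0 := (Fact.out : p.Prime).ne_zero
  obtain ⟨m, rfl⟩ := Nat.exists_eq_succ_of_ne_zero hp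
  have := weyl_pow_aux x y h m
  have hc : ((m : R) + 1) = 0 := by
    have := CharP.cast_eq_zero R (m + 1); push_cast at this; exact this
  unfold Commute SemiconjBy
  rw [Nat.succ_eq_add_one] at *
  rw [this, hc, zero_mul, add_zero]

theorem weyl_char_p_central (p : ℕ) [Fact p.Prime] {R : Type*} [Ring R] [CharP R p]
    (x y : R) (h : y * x = x * y + 1) :
    Commute (x ^ p) y ∧ Commute (y ^ p) x := by
  refine ⟨weyl_xp x y h, ?_⟩
  -- work in the opposite ring
  have h' : (MulOpposite.op x) * (MulOpposite.op y)
      = (MulOpposite.op y) * (MulOpposite.op x) + 1 := by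
    rw [← MulOpposite.op_mul, ← MulOpposite.op_mul, h]
    simp
  haveI : CharP Rᵐᵒᵖ p := ⟨fun n => by
    rw [← MulOpposite.op_natCast, MulOpposite.op_eq_zero_iff, CharP.cast_eq_zero_iff R p]⟩
  have := weyl_xp (p := p) (MulOpposite.op y) (MulOpposite.op x) h'
  unfold Commute SemiconjBy at this ⊢
  rw [← MulOpposite.op_pow, ← MulOpposite.op_mul, ← MulOpposite.op_mul] at this
  exact (MulOpposite.op_injective (by simpa using this.symm))
end

section
/- Let R be an associative unital ring of prime characteristic p, and x, s ∈ R with sx = xs + s. Then s^p commutes with x, and x^p - x commutes with s. -/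
theorem shift_char_p_central (p : ℕ) [Fact p.Prime] {R : Type*} [Ring R] [CharP R p]
    (x s : R) (h : s * x = x * s + s) :
    Commute (s ^ p) x ∧ Commute (x ^ p - x) s := by
  have h' : s * x = (x + 1) * s := by rw [h, add_mul, one_mul]
  have h1 : ∀ m : ℕ, s ^ m * x = (x + (m : R)) * s ^ m := by
    intro m
    induction m with
    | zero => simp
    | succ n ih =>
      rw [pow_succ, mul_assoc, h', ← mul_assoc, mul_add, mul_one, ih]
      push_cast
      noncomm_ring
  have h2 : ∀ n : ℕ, s * x ^ n = (x + 1) ^ n * s := by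
    intro n
    induction n with
    | zero => simp
    | succ n ih =>
      rw [pow_succ, ← mul_assoc, ih, mul_assoc, h', pow_succ, mul_assoc]
  constructor
  · have := h1 p
    simp only [CharP.cast_eq_zero, add_zero] at this
    exact this
  · have hc : Commute x (1 : R) := Commute.one_right x
    have frob : (x + 1) ^ p = x ^ p + 1 := by
      rw [add_pow_char_of_commute p hc, one_pow]
    unfold Commute SemiconjBy
    rw [sub_mul, mul_sub, h2, frob, h', add_mul, add_mul, one_mul]
    abel
end
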